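/- arXiv:1512.08160 — 2 statements merged into one kernel-verified Lean document; each statement's English description precedes it below -/
import Mathlib

section
/- Let p > 2, a > 0, ℓ > 0, M > 0, and let B = B_{2R}(X₀) ⊂ ℝ^N be a ball. Suppose u ∈ L^∞(B) with |u| ≤ M a.e., χ : B → [0,1] is measurable, and V, W ∈ L^p(B; ℝ^N) satisfy the two identities ∫_B ‖V‖^{p−2} V · (V − W) = ∫_B (a u + ℓ χ)(V_N − W_N) and ∫_B ‖W‖^{p−2} W · (V − W) = 0 (which hold when V = ∇u for a weak solution u of Δ_p u = ∂_z β(u) in B and W = ∇v for the p-harmonic replacement v of u in B, tested with u − v). Then there is a constant C > 0 depending only on p, N, a, ℓ, M such that ∫_B ‖V − W‖^p ≤ C R^N; consequently there is a constant C' > 0 of the same dependence with ∫_B ‖V − W‖² ≤ C' R^N. -/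
open MeasureTheory Metric Set Filter
open scoped RealInnerProductSpace Topology

noncomputable section

lemma coord_abs_le_norm {N : ℕ} (x : EuclideanSpace ℝ (Fin N)) (i : Fin N) :
    |x i| ≤ ‖x‖ := by
  rw [EuclideanSpace.norm_eq]
  have h1 : |x i| = Real.sqrt (‖x i‖ ^ 2) := by
    rw [Real.sqrt_sq_eq_abs, Real.norm_eq_abs, abs_abs]
  rw [h1]
  apply Real.sqrt_le_sqrt
  exact Finset.single_le_sum (f := fun j => ‖x j‖ ^ 2)
    (fun j _ => sq_nonneg _) (Finset.mem_univ i)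

lemma coercive_ptwise {E : Type*} [NormedAddCommGroup E] [InnerProductSpace ℝ E]
    {p : ℝ} (hp : 2 < p) (ξ η : E) :
    (2:ℝ) ^ (1 - p) * ‖ξ - η‖ ^ p
      ≤ ‖ξ‖ ^ (p - 2) * ⟪ξ, ξ - η⟫ - ‖η‖ ^ (p - 2) * ⟪η, ξ - η⟫ := by
  have hA : (0:ℝ) ≤ ‖ξ‖ ^ (p - 2) := Real.rpow_nonneg (norm_nonneg _) _
  have hB : (0:ℝ) ≤ ‖η‖ ^ (p - 2) := Real.rpow_nonneg (norm_nonneg _) _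
  have h1 : ⟪ξ, ξ - η⟫ = ‖ξ‖ ^ 2 - ⟪ξ, η⟫ := by
    rw [inner_sub_right, real_inner_self_eq_norm_sq]
  have h2 : ⟪η, ξ - η⟫ = ⟪ξ, η⟫ - ‖η‖ ^ 2 := by
    rw [inner_sub_right, real_inner_self_eq_norm_sq, real_inner_comm]
  have h3 : ‖ξ - η‖ ^ 2 = ‖ξ‖ ^ 2 - 2 * ⟪ξ, η⟫ + ‖η‖ ^ 2 := norm_sub_sq_real ξ η
  have hid : ‖ξ‖ ^ (p - 2) * ⟪ξ, ξ - η⟫ - ‖η‖ ^ (p - 2) * ⟪η, ξ - η⟫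
      = ((‖ξ‖ ^ (p - 2) + ‖η‖ ^ (p - 2)) * ‖ξ - η‖ ^ 2
        + (‖ξ‖ ^ (p - 2) - ‖η‖ ^ (p - 2)) * (‖ξ‖ ^ 2 - ‖η‖ ^ 2)) / 2 := by
    rw [h1, h2, h3]; ring
  have hsign : 0 ≤ (‖ξ‖ ^ (p - 2) - ‖η‖ ^ (p - 2)) * (‖ξ‖ ^ 2 - ‖η‖ ^ 2) := by
    rcases le_total ‖η‖ ‖ξ‖ with h | h
    · apply mul_nonneg
      · have := Real.rpow_le_rpow (norm_nonneg η) h (by linarith : (0:ℝ) ≤ p - 2)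
        linarith
      · have := pow_le_pow_left₀ (norm_nonneg η) h 2
        linarith
    · have h1' := Real.rpow_le_rpow (norm_nonneg ξ) h (by linarith : (0:ℝ) ≤ p - 2)
      have h2' := pow_le_pow_left₀ (norm_nonneg ξ) h 2
      nlinarith
  have hmain : (2:ℝ) ^ (2 - p) * ‖ξ - η‖ ^ p
      ≤ (‖ξ‖ ^ (p - 2) + ‖η‖ ^ (p - 2)) * ‖ξ - η‖ ^ 2 := by
    rcases eq_or_lt_of_le (norm_nonneg (ξ - η)) with hz | hz
    · rw [← hz, Real.zero_rpow (by positivity : p ≠ 0)]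
      simp
    · set m := max ‖ξ‖ ‖η‖ with hm
      have hζm : ‖ξ - η‖ / 2 ≤ m := by
        have := norm_sub_le ξ η
        rcases le_total ‖ξ‖ ‖η‖ with h | h
        · have h2' : ‖η‖ ≤ m := le_max_right _ _
          linarith
        · have h2' : ‖ξ‖ ≤ m := le_max_left _ _
          linarith
      have hmpos : 0 ≤ ‖ξ - η‖ / 2 := by positivity
      have hstep : (‖ξ - η‖ / 2) ^ (p - 2) ≤ m ^ (p - 2) :=
        Real.rpow_le_rpow hmpos hζm (by linarith)
      have hAB : m ^ (p - 2) ≤ ‖ξ‖ ^ (p - 2) + ‖η‖ ^ (p - 2) := by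
        rcases max_cases ‖ξ‖ ‖η‖ with ⟨h, _⟩ | ⟨h, _⟩ <;> rw [hm, h] <;> linarith
      have hchain : (‖ξ - η‖ / 2) ^ (p - 2) * ‖ξ - η‖ ^ 2
          ≤ (‖ξ‖ ^ (p - 2) + ‖η‖ ^ (p - 2)) * ‖ξ - η‖ ^ 2 :=
        mul_le_mul_of_nonneg_right (hstep.trans hAB) (sq_nonneg _)
      have heq : (‖ξ - η‖ / 2) ^ (p - 2) * ‖ξ - η‖ ^ 2
          = (2:ℝ) ^ (2 - p) * ‖ξ - η‖ ^ p := by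
        rw [Real.div_rpow (le_of_lt hz) (by norm_num : (0:ℝ) ≤ 2)]
        rw [div_mul_eq_mul_div, div_eq_mul_inv, ← Real.rpow_neg (by norm_num : (0:ℝ) ≤ 2),
          neg_sub]
        have : ‖ξ - η‖ ^ (p - 2) * ‖ξ - η‖ ^ 2 = ‖ξ - η‖ ^ p := by
          rw [← Real.rpow_natCast ‖ξ - η‖ 2, ← Real.rpow_add hz]
          norm_num
        rw [this]; ring
      rw [← heq]; exact hchain
  have h2p : (2:ℝ) ^ (1 - p) * ‖ξ - η‖ ^ p = ((2:ℝ) ^ (2 - p) * ‖ξ - η‖ ^ p) / 2 := by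
    have : (2:ℝ) ^ (2 - p) = (2:ℝ) ^ (1 - p) * 2 := by
      rw [show (2:ℝ) - p = (1 - p) + 1 by ring, Real.rpow_add (by norm_num : (0:ℝ) < 2),
        Real.rpow_one]
    rw [this]; ring
  rw [hid, h2p]
  linarith

set_option maxHeartbeats 1000000 in
/-- Comparison estimate with the `p`-harmonic replacement, `p > 2`. -/
theorem comparison_estimate_p_ge_two
    (N : ℕ) (hN : 2 ≤ N)
    (p a ℓ M : ℝ) (hp : 2 < p) (ha : 0 < a) (hℓ : 0 < ℓ) (hM : 0 < M) :
    ∃ c : ℝ, 0 < c ∧ ∃ c' : ℝ, 0 < c' ∧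
      ∀ (R : ℝ), 0 < R → ∀ (X₀ : EuclideanSpace ℝ (Fin N))
        (u χ : EuclideanSpace ℝ (Fin N) → ℝ)
        (V W : EuclideanSpace ℝ (Fin N) → EuclideanSpace ℝ (Fin N)),
        (∀ᵐ X ∂(volume.restrict (ball X₀ (2 * R))), |u X| ≤ M) →
        Measurable χ → (∀ X, χ X ∈ Icc (0:ℝ) 1) →
        MemLp V (ENNReal.ofReal p) (volume.restrict (ball X₀ (2 * R))) →
        MemLp W (ENNReal.ofReal p) (volume.restrict (ball X₀ (2 * R))) →
        (∫ X in ball X₀ (2 * R), ‖V X‖ ^ (p - 2) * ⟪V X, V X - W X⟫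
          = ∫ X in ball X₀ (2 * R),
              (a * u X + ℓ * χ X) * (V X ⟨N - 1, by omega⟩ - W X ⟨N - 1, by omega⟩)) →
        (∫ X in ball X₀ (2 * R), ‖W X‖ ^ (p - 2) * ⟪W X, V X - W X⟫ = 0) →
        (∫ X in ball X₀ (2 * R), ‖V X - W X‖ ^ p ≤ c * R ^ (N : ℝ)) ∧
        (∫ X in ball X₀ (2 * R), ‖V X - W X‖ ^ 2 ≤ c' * R ^ (N : ℝ)) := by
  classical
  have hp1 : (1:ℝ) < p := by linarith
  have hp0 : (0:ℝ) < p := by linarith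
  set q := Real.conjExponent p with hqdef
  have hpq : p.HolderConjugate q := Real.HolderConjugate.conjExponent hp1
  set μ0 := (2:ℝ) ^ (1 - p) with hμ0def
  have hμ0pos : 0 < μ0 := Real.rpow_pos_of_pos (by norm_num) _
  set K := a * M + ℓ with hKdef
  have hKpos : 0 < K := by positivity
  haveI : Nonempty (Fin N) := ⟨⟨0, by omega⟩⟩
  set κ := (volume (ball (0 : EuclideanSpace ℝ (Fin N)) 1)).toReal with hκdef
  have hκpos : 0 < κ :=
    ENNReal.toReal_pos (measure_ball_pos _ _ one_pos).ne' measure_ball_lt_top.ne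
  have hq0 : 0 < q := hpq.symm.pos
  refine ⟨(K / μ0) ^ q * (2 ^ N * κ), by positivity,
    (K / μ0) ^ q * (2 ^ N * κ) + 2 ^ N * κ, by positivity, ?_⟩
  intro R hR X₀ u χ V W hu hχm hχ hV hW hid1 hid2
  set ν := volume.restrict (ball X₀ (2 * R)) with hν
  haveI : IsFiniteMeasure ν := ⟨by rw [hν, Measure.restrict_apply_univ]; exact measure_ball_lt_top⟩
  have hζ : MemLp (fun X => V X - W X) (ENNReal.ofReal p) ν := hV.sub hW
  have hop0 : (ENNReal.ofReal p) ≠ 0 := by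
    rw [Ne, ENNReal.ofReal_eq_zero]; linarith
  have hoptop : (ENNReal.ofReal p) ≠ ⊤ := ENNReal.ofReal_ne_top
  have hIint : Integrable (fun X => ‖V X - W X‖ ^ p) ν := by
    have h := hζ.integrable_norm_rpow hop0 hoptop
    rwa [ENNReal.toReal_ofReal hp0.le] at h
  -- integrability of the two pairing integrands
  have key : ∀ (G : EuclideanSpace ℝ (Fin N) → EuclideanSpace ℝ (Fin N)),
      MemLp G (ENNReal.ofReal p) ν →
      Integrable (fun X => ‖G X‖ ^ (p - 2) * ⟪G X, V X - W X⟫) ν := by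
    intro G hG
    have hGpInt : Integrable (fun X => ‖G X‖ ^ p) ν := by
      have h := hG.integrable_norm_rpow hop0 hoptop
      rwa [ENNReal.toReal_ofReal hp0.le] at h
    have hdom : Integrable (fun X => ‖G X‖ ^ p / q + ‖V X - W X‖ ^ p / p) ν :=
      (hGpInt.div_const q).add (hIint.div_const p)
    refine hdom.mono' ?_ (Eventually.of_forall fun X => ?_)
    · exact ((hG.1.norm.aemeasurable.pow_const (p - 2)).aestronglyMeasurable).mul
        ((hG.1.aemeasurable.inner (hV.1.aemeasurable.sub hW.1.aemeasurable)).aestronglyMeasurable)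
    · have h1 : |⟪G X, V X - W X⟫| ≤ ‖G X‖ * ‖V X - W X‖ := abs_real_inner_le_norm _ _
      have h2 : ‖G X‖ ^ (p - 2) * ‖G X‖ = ‖G X‖ ^ (p - 1) := by
        rw [show p - 1 = (p - 2) + 1 by ring,
          Real.rpow_add_of_nonneg (norm_nonneg _) (by linarith) zero_le_one, Real.rpow_one]
      have hGp : (0:ℝ) ≤ ‖G X‖ ^ (p - 2) := Real.rpow_nonneg (norm_nonneg _) _
      have hyoung : ‖G X‖ ^ (p - 1) * ‖V X - W X‖
          ≤ ‖G X‖ ^ p / q + ‖V X - W X‖ ^ p / p := by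
        have h := Real.young_inequality_of_nonneg (Real.rpow_nonneg (norm_nonneg (G X)) (p-1))
          (norm_nonneg (V X - W X)) hpq.symm
        have hpow : (‖G X‖ ^ (p - 1)) ^ q = ‖G X‖ ^ p := by
          rw [← Real.rpow_mul (norm_nonneg _), hpq.sub_one_mul_conj]
        rw [hpow] at h
        exact h
      calc ‖‖G X‖ ^ (p - 2) * ⟪G X, V X - W X⟫‖
          = ‖G X‖ ^ (p - 2) * |⟪G X, V X - W X⟫| := by
            rw [Real.norm_eq_abs, abs_mul, abs_of_nonneg hGp]
        _ ≤ ‖G X‖ ^ (p - 2) * (‖G X‖ * ‖V X - W X‖) := mul_le_mul_of_nonneg_left h1 hGp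
        _ = ‖G X‖ ^ (p - 1) * ‖V X - W X‖ := by rw [← mul_assoc, h2]
        _ ≤ _ := hyoung
  have hf1 := key V hV
  have hf2 := key W hW
  -- Step 1: coercivity
  have hstep1 : μ0 * (∫ X in ball X₀ (2 * R), ‖V X - W X‖ ^ p)
      ≤ ∫ X in ball X₀ (2 * R),
          (a * u X + ℓ * χ X) * (V X ⟨N - 1, by omega⟩ - W X ⟨N - 1, by omega⟩) := by
    calc μ0 * ∫ X in ball X₀ (2 * R), ‖V X - W X‖ ^ p
        = ∫ X in ball X₀ (2 * R), μ0 * ‖V X - W X‖ ^ p := (integral_const_mul μ0 _).symm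
      _ ≤ ∫ X in ball X₀ (2 * R),
            (‖V X‖ ^ (p - 2) * ⟪V X, V X - W X⟫ - ‖W X‖ ^ (p - 2) * ⟪W X, V X - W X⟫) :=
          integral_mono (hIint.const_mul μ0) (hf1.sub hf2)
            (fun X => coercive_ptwise hp (V X) (W X))
      _ = (∫ X in ball X₀ (2 * R), ‖V X‖ ^ (p - 2) * ⟪V X, V X - W X⟫)
            - ∫ X in ball X₀ (2 * R), ‖W X‖ ^ (p - 2) * ⟪W X, V X - W X⟫ :=
          integral_sub hf1 hf2
      _ = _ := by rw [hid1, hid2, sub_zero]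
  -- Step 2: bound the right side
  have hζ1 : Integrable (fun X => ‖V X - W X‖) ν :=
    (hζ.integrable (ENNReal.one_le_ofReal.mpr (by linarith))).norm
  have hstep2 : (∫ X in ball X₀ (2 * R),
        (a * u X + ℓ * χ X) * (V X ⟨N - 1, by omega⟩ - W X ⟨N - 1, by omega⟩))
      ≤ K * ∫ X in ball X₀ (2 * R), ‖V X - W X‖ := by
    have habs : (∫ X in ball X₀ (2 * R),
          (a * u X + ℓ * χ X) * (V X ⟨N - 1, by omega⟩ - W X ⟨N - 1, by omega⟩))
        ≤ ∫ X in ball X₀ (2 * R),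
            |(a * u X + ℓ * χ X) * (V X ⟨N - 1, by omega⟩ - W X ⟨N - 1, by omega⟩)| := by
      have h := norm_integral_le_integral_norm (μ := ν)
        (fun X => (a * u X + ℓ * χ X) * (V X ⟨N - 1, by omega⟩ - W X ⟨N - 1, by omega⟩))
      simp only [Real.norm_eq_abs] at h
      exact (le_abs_self _).trans h
    refine habs.trans ?_
    rw [show K * ∫ X in ball X₀ (2 * R), ‖V X - W X‖
        = ∫ X in ball X₀ (2 * R), K * ‖V X - W X‖ from (integral_const_mul K _).symm]
    refine integral_mono_of_nonneg (Eventually.of_forall fun X => abs_nonneg _)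
      (hζ1.const_mul K) ?_
    filter_upwards [hu] with X hX
    have h1 : |a * u X + ℓ * χ X| ≤ K := by
      have hc1 : |a * u X| ≤ a * M := by
        rw [abs_mul, abs_of_pos ha]
        exact mul_le_mul_of_nonneg_left hX ha.le
      have hc2 : |ℓ * χ X| ≤ ℓ := by
        rw [abs_mul, abs_of_pos hℓ]
        have := (hχ X).1; have := (hχ X).2
        have : |χ X| ≤ 1 := abs_le.mpr ⟨by linarith [(hχ X).1], (hχ X).2⟩
        calc ℓ * |χ X| ≤ ℓ * 1 := mul_le_mul_of_nonneg_left this hℓ.le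
          _ = ℓ := mul_one ℓ
      calc |a * u X + ℓ * χ X| ≤ |a * u X| + |ℓ * χ X| := abs_add_le _ _
        _ ≤ a * M + ℓ := add_le_add hc1 hc2
        _ = K := rfl
    have h2 : |V X ⟨N - 1, by omega⟩ - W X ⟨N - 1, by omega⟩| ≤ ‖V X - W X‖ := by
      have := coord_abs_le_norm (V X - W X) ⟨N - 1, by omega⟩
      simpa using this
    calc |(a * u X + ℓ * χ X) * (V X ⟨N - 1, by omega⟩ - W X ⟨N - 1, by omega⟩)|
        = |a * u X + ℓ * χ X| * |V X ⟨N - 1, by omega⟩ - W X ⟨N - 1, by omega⟩| := abs_mul _ _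
      _ ≤ K * ‖V X - W X‖ := mul_le_mul h1 h2 (abs_nonneg _) hKpos.le
  -- Step 3: Hölder
  set I := ∫ X in ball X₀ (2 * R), ‖V X - W X‖ ^ p with hIdef
  have hI0 : 0 ≤ I :=
    integral_nonneg fun X => Real.rpow_nonneg (norm_nonneg _) _
  set A0 := (ν Set.univ).toReal with hA0def
  have hA0nn : 0 ≤ A0 := ENNReal.toReal_nonneg
  have hH : (∫ X in ball X₀ (2 * R), ‖V X - W X‖)
      ≤ I ^ (1/p) * A0 ^ (1/q) := by
    have hone : MemLp (fun _ : EuclideanSpace ℝ (Fin N) => (1:ℝ)) (ENNReal.ofReal q) ν :=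
      memLp_const 1
    have h := integral_mul_norm_le_Lp_mul_Lq (μ := ν) hpq hζ.norm hone
    simp only [norm_one, mul_one, Real.one_rpow, norm_norm] at h
    rw [integral_const, smul_eq_mul, mul_one] at h
    exact h
  -- Step 4: combine
  have hchain : μ0 * I ≤ K * (I ^ (1/p) * A0 ^ (1/q)) :=
    hstep1.trans (hstep2.trans (mul_le_mul_of_nonneg_left hH hKpos.le))
  have hIbound : I ≤ (K / μ0) ^ q * A0 := by
    rcases eq_or_lt_of_le hI0 with hI | hIpos
    · rw [← hI]; positivity
    · have hIp : 0 < I ^ (1/p) := Real.rpow_pos_of_pos hIpos _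
      have emul : I ^ (1/q) * I ^ (1/p) = I := by
        rw [← Real.rpow_add hIpos,
          show 1/q + 1/p = 1 by
            rw [one_div, one_div, add_comm]; exact hpq.inv_add_inv_eq_one,
          Real.rpow_one]
      have e2 : μ0 * I ^ (1/q) ≤ K * A0 ^ (1/q) := by
        by_contra hcon
        push_neg at hcon
        have h' := mul_lt_mul_of_pos_right hcon hIp
        have e3 : μ0 * I ^ (1/q) * I ^ (1/p) = μ0 * I := by
          rw [mul_assoc, emul]
        have e4 : K * (I ^ (1/p) * A0 ^ (1/q)) = K * A0 ^ (1/q) * I ^ (1/p) := by ring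
        rw [e3] at h'
        linarith [hchain, e4 ▸ hchain]
      have e5 : I ^ (1/q) ≤ K / μ0 * A0 ^ (1/q) := by
        rw [div_mul_eq_mul_div, le_div_iff₀ hμ0pos]
        linarith
      have e7 : (I ^ (1/q)) ^ q = I := by
        rw [← Real.rpow_mul hI0, one_div_mul_cancel hq0.ne', Real.rpow_one]
      have e8 : (K / μ0 * A0 ^ (1/q)) ^ q = (K / μ0) ^ q * A0 := by
        rw [Real.mul_rpow (by positivity) (Real.rpow_nonneg hA0nn _),
          ← Real.rpow_mul hA0nn, one_div_mul_cancel hq0.ne', Real.rpow_one]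
      calc I = (I ^ (1/q)) ^ q := e7.symm
        _ ≤ (K / μ0 * A0 ^ (1/q)) ^ q :=
            Real.rpow_le_rpow (Real.rpow_nonneg hI0 _) e5 hq0.le
        _ = (K / μ0) ^ q * A0 := e8
  -- volume of the ball
  haveI : Nontrivial (EuclideanSpace ℝ (Fin N)) := by
    refine ⟨0, EuclideanSpace.single ⟨0, by omega⟩ 1, ?_⟩
    intro h
    have := congrArg (fun v : EuclideanSpace ℝ (Fin N) => v ⟨0, by omega⟩) h.symm
    simp [EuclideanSpace.single_apply] at this
  have hA0val : A0 = 2 ^ N * κ * R ^ N := by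
    rw [hA0def, hν, Measure.restrict_apply_univ,
      Measure.addHaar_ball volume X₀ (by linarith : (0:ℝ) ≤ 2 * R),
      finrank_euclideanSpace_fin, ENNReal.toReal_mul,
      ENNReal.toReal_ofReal (by positivity), ← hκdef, mul_pow]
    ring
  constructor
  · rw [Real.rpow_natCast]
    calc I ≤ (K / μ0) ^ q * A0 := hIbound
      _ = (K / μ0) ^ q * (2 ^ N * κ) * R ^ N := by rw [hA0val]; ring
  · rw [Real.rpow_natCast]
    have h2exp : (ENNReal.ofReal 2) ≤ ENNReal.ofReal p := ENNReal.ofReal_le_ofReal hp.le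
    have hζ2 : MemLp (fun X => V X - W X) (ENNReal.ofReal 2) ν :=
      hζ.mono_exponent h2exp
    have h2int : Integrable (fun X => ‖V X - W X‖ ^ 2) ν := by
      have h := hζ2.integrable_norm_rpow (by rw [Ne, ENNReal.ofReal_eq_zero]; norm_num)
        ENNReal.ofReal_ne_top
      rw [ENNReal.toReal_ofReal (by norm_num : (0:ℝ) ≤ 2)] at h
      have heq : (fun X => ‖V X - W X‖ ^ (2:ℝ)) = fun X => ‖V X - W X‖ ^ (2:ℕ) := by
        funext X
        rw [← Real.rpow_natCast ‖V X - W X‖ 2]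
        norm_num
      rwa [heq] at h
    have hpt : ∀ X, ‖V X - W X‖ ^ 2 ≤ ‖V X - W X‖ ^ p + 1 := by
      intro X
      rcases le_total ‖V X - W X‖ 1 with h | h
      · have h1 : ‖V X - W X‖ ^ 2 ≤ 1 := pow_le_one₀ (norm_nonneg _) h
        have h2 := Real.rpow_nonneg (norm_nonneg (V X - W X)) p
        linarith
      · have h1 : ‖V X - W X‖ ^ (2:ℝ) ≤ ‖V X - W X‖ ^ p :=
          Real.rpow_le_rpow_of_exponent_le h hp.le
        rw [show ((2:ℝ)) = ((2:ℕ):ℝ) by norm_num, Real.rpow_natCast] at h1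
        linarith
    have hmono : (∫ X in ball X₀ (2 * R), ‖V X - W X‖ ^ 2) ≤ I + A0 := by
      calc (∫ X in ball X₀ (2 * R), ‖V X - W X‖ ^ 2)
          ≤ ∫ X in ball X₀ (2 * R), (‖V X - W X‖ ^ p + 1) :=
            integral_mono (μ := ν) h2int
              ((hIint.add (integrable_const 1)) :
                Integrable (fun X => ‖V X - W X‖ ^ p + 1) ν) hpt
        _ = I + A0 := by
            rw [integral_add hIint (integrable_const 1), integral_const, smul_eq_mul, mul_one]; rfl
    calc (∫ X in ball X₀ (2 * R), ‖V X - W X‖ ^ 2) ≤ I + A0 := hmono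
      _ ≤ (K / μ0) ^ q * (2 ^ N * κ) * R ^ N + 2 ^ N * κ * R ^ N := by
          rw [hA0val]
          have : I ≤ (K / μ0) ^ q * (2 ^ N * κ) * R ^ N := by
            rw [hA0val] at hIbound; linarith [hIbound]
          linarith
      _ = ((K / μ0) ^ q * (2 ^ N * κ) + 2 ^ N * κ) * R ^ N := by ring
end
end

section
/- Let N ≥ 1, X₀ ∈ ℝ^N, ρ > 0, K ≥ 0, and let u be a real-valued C¹ function on the closed ball of radius ρ around X₀ with u(X₀) = 0. Suppose that for every 0 < t ≤ ρ one has ∫_{B_t(X₀)} ‖∇u(X) − (∇u)_{X₀,t}‖ dX ≤ K t^N, where (∇u)_{X₀,t} = ⨍_{B_t(X₀)} ∇u. Then | ∫_{B_ρ(X₀)} u | ≤ K ρ^{N+1}; equivalently, ρ^{−N} | ∫_{B_ρ(X₀)} u | ≤ K ρ. -/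
open MeasureTheory Metric Set Filter
open scoped RealInnerProductSpace Topology

noncomputable section

open scoped Pointwise

variable {N : ℕ}

/-- Translation of a set integral over a ball. -/
lemma transl (f : EuclideanSpace ℝ (Fin N) → ℝ) (X₀ : EuclideanSpace ℝ (Fin N)) (t : ℝ) :
    ∫ X in ball X₀ t, f (X - X₀) = ∫ Z in ball (0 : EuclideanSpace ℝ (Fin N)) t, f Z := by
  rw [← integral_indicator measurableSet_ball, ← integral_indicator measurableSet_ball]
  have h : (fun X => indicator (ball X₀ t) (fun X => f (X - X₀)) X)
      = fun X => indicator (ball (0 : EuclideanSpace ℝ (Fin N)) t) f (X - X₀) := by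
    funext X
    by_cases h : X ∈ ball X₀ t
    · rw [indicator_of_mem h, indicator_of_mem]
      simpa [mem_ball, dist_eq_norm] using h
    · rw [indicator_of_notMem h, indicator_of_notMem]
      simpa [mem_ball, dist_eq_norm] using h
  rw [h]
  exact integral_sub_right_eq_self _ X₀

/-- Scaling of a set integral over a ball centered at the origin. -/
lemma scalg (g : EuclideanSpace ℝ (Fin N) → ℝ) {s : ℝ} (hs : 0 < s) (t : ℝ) :
    ∫ Z in ball (0 : EuclideanSpace ℝ (Fin N)) t, g (s • Z)
      = (s ^ N)⁻¹ * ∫ Y in ball (0 : EuclideanSpace ℝ (Fin N)) (s * t), g Y := by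
  have h := MeasureTheory.Measure.setIntegral_comp_smul_of_pos
    (volume : Measure (EuclideanSpace ℝ (Fin N))) g (ball (0 : EuclideanSpace ℝ (Fin N)) t) hs
  rw [h]
  have hball : s • ball (0 : EuclideanSpace ℝ (Fin N)) t
      = ball (0 : EuclideanSpace ℝ (Fin N)) (s * t) := by
    rw [smul_ball hs.ne' (0 : EuclideanSpace ℝ (Fin N)) t]
    simp [Real.norm_eq_abs, abs_of_pos hs]
  rw [hball, finrank_euclideanSpace_fin, smul_eq_mul]

/-- A linear functional has zero integral over a ball centered at the origin. -/
lemma oddzero (c : EuclideanSpace ℝ (Fin N)) (t : ℝ) :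
    ∫ Z in ball (0 : EuclideanSpace ℝ (Fin N)) t, ⟪c, Z⟫ = 0 := by
  rw [← integral_indicator measurableSet_ball]
  set f := indicator (ball (0 : EuclideanSpace ℝ (Fin N)) t) (fun Z => ⟪c, Z⟫) with hf
  have h1 : ∫ x, f (-x) = ∫ x, f x := integral_neg_eq_self f volume
  have h2 : ∀ x, f (-x) = - f x := by
    intro x
    by_cases h : x ∈ ball (0 : EuclideanSpace ℝ (Fin N)) t
    · have h' : -x ∈ ball (0 : EuclideanSpace ℝ (Fin N)) t := by
        simpa [mem_ball_zero_iff] using h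
      simp [hf, indicator_of_mem h, indicator_of_mem h', inner_neg_neg, real_inner_comm]
    · have h' : -x ∉ ball (0 : EuclideanSpace ℝ (Fin N)) t := by
        simpa [mem_ball_zero_iff] using h
      simp [hf, indicator_of_notMem h, indicator_of_notMem h']
  simp_rw [h2, integral_neg] at h1
  linarith

/-- Averaged linear growth: if `u` is `C¹` on the closed ball
`B̄_ρ(X₀)`, vanishes at the center, and its gradient has `L¹`-oscillation at most `K t^N`
on every concentric ball `B_t(X₀)`, `0 < t ≤ ρ`, then `|∫_{B_ρ(X₀)} u| ≤ K ρ^{N+1}`. -/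
theorem averaged_linear_growth
    (N : ℕ) (hN : 1 ≤ N)
    (X₀ : EuclideanSpace ℝ (Fin N)) (ρ K : ℝ) (hρ : 0 < ρ) (hK : 0 ≤ K)
    (u : EuclideanSpace ℝ (Fin N) → ℝ)
    (hu : ContDiffOn ℝ 1 u (closedBall X₀ ρ))
    (hu0 : u X₀ = 0)
    (hosc : ∀ t ∈ Ioc (0:ℝ) ρ,
      ∫ X in ball X₀ t, ‖gradient u X - ⨍ Y in ball X₀ t, gradient u Y‖ ≤ K * t ^ (N : ℝ)) :
    |∫ X in ball X₀ ρ, u X| ≤ K * ρ ^ ((N : ℝ) + 1) := by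
  have hrpow : ρ ^ ((N : ℝ) + 1) = ρ ^ (N + 1) := by
    rw [← Real.rpow_natCast ρ (N + 1)]
    push_cast
    ring_nf
  rw [hrpow]
  -- basic differentiability facts
  have hu' : ContDiffOn ℝ 1 u (ball X₀ ρ) := hu.mono ball_subset_closedBall
  have hfd : ∀ X ∈ ball X₀ ρ, HasFDerivAt u (fderiv ℝ u X) X := fun X hX =>
    ((hu'.differentiableOn one_ne_zero).differentiableAt (isOpen_ball.mem_nhds hX)).hasFDerivAt
  have hgc : ContinuousOn (gradient u) (ball X₀ ρ) := by
    have h := hu'.continuousOn_fderiv_of_isOpen isOpen_ball le_rfl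
    exact ((InnerProductSpace.toDual ℝ (EuclideanSpace ℝ (Fin N))).symm.continuous.comp_continuousOn h)
  -- the gradient is bounded on the ball
  obtain ⟨M, hM0, hM⟩ : ∃ M : ℝ, 0 ≤ M ∧ ∀ Y ∈ ball X₀ ρ, ‖gradient u Y‖ ≤ M := by
    have hud : UniqueDiffOn ℝ (closedBall X₀ ρ) :=
      uniqueDiffOn_convex (convex_closedBall X₀ ρ)
        (by rw [interior_closedBall X₀ hρ.ne']; exact nonempty_ball.2 hρ)
    have hfw : ContinuousOn (fderivWithin ℝ u (closedBall X₀ ρ)) (closedBall X₀ ρ) :=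
      hu.continuousOn_fderivWithin hud le_rfl
    obtain ⟨C, hC⟩ := (isCompact_closedBall X₀ ρ).exists_bound_of_continuousOn hfw
    refine ⟨max C 0, le_max_right _ _, fun Y hY => ?_⟩
    have heq : fderivWithin ℝ u (closedBall X₀ ρ) Y = fderiv ℝ u Y :=
      fderivWithin_of_mem_nhds (mem_nhds_iff.2 ⟨ball X₀ ρ, ball_subset_closedBall, isOpen_ball, hY⟩)
    have h1 : ‖gradient u Y‖ = ‖fderiv ℝ u Y‖ :=
      (InnerProductSpace.toDual ℝ (EuclideanSpace ℝ (Fin N))).symm.norm_map _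
    rw [h1, ← heq]
    exact le_trans (hC Y (ball_subset_closedBall hY)) (le_max_left _ _)
  -- segments stay in the ball
  have hseg : ∀ X ∈ ball X₀ ρ, ∀ s ∈ Icc (0:ℝ) 1, X₀ + s • (X - X₀) ∈ ball X₀ ρ := by
    intro X hX s hs
    have hvρ : ‖X - X₀‖ < ρ := by rwa [← dist_eq_norm, ← mem_ball]
    rw [mem_ball, dist_eq_norm, add_sub_cancel_left, norm_smul]
    calc ‖s‖ * ‖X - X₀‖ ≤ 1 * ‖X - X₀‖ := by
          apply mul_le_mul_of_nonneg_right _ (norm_nonneg _)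
          rw [Real.norm_eq_abs, abs_of_nonneg hs.1]; exact hs.2
      _ < ρ := by rwa [one_mul]
  -- fundamental theorem of calculus along radii
  have hFTC : ∀ X ∈ ball X₀ ρ,
      u X = ∫ s in Ioc (0:ℝ) 1, ⟪gradient u (X₀ + s • (X - X₀)), X - X₀⟫ := by
    intro X hX
    have key : ∀ s ∈ Icc (0:ℝ) 1, HasDerivAt (fun τ : ℝ => u (X₀ + τ • (X - X₀)))
        (⟪gradient u (X₀ + s • (X - X₀)), X - X₀⟫) s := by
      intro s hs
      have h1 : HasDerivAt (fun τ : ℝ => X₀ + τ • (X - X₀)) (X - X₀) s := by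
        simpa using ((hasDerivAt_id s).smul_const (X - X₀)).const_add X₀
      have h2 := (hfd _ (hseg X hX s hs)).comp_hasDerivAt s h1
      have h3 : ⟪gradient u (X₀ + s • (X - X₀)), X - X₀⟫
          = fderiv ℝ u (X₀ + s • (X - X₀)) (X - X₀) := InnerProductSpace.toDual_symm_apply
      rw [h3]
      exact h2
    have hc : ContinuousOn (fun s : ℝ => ⟪gradient u (X₀ + s • (X - X₀)), X - X₀⟫)
        (Icc (0:ℝ) 1) := by
      apply ContinuousOn.inner
      · exact hgc.comp
          ((continuous_const.add (continuous_id.smul continuous_const)).continuousOn)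
          (fun s hs => hseg X hX s hs)
      · exact continuousOn_const
    have hint : IntervalIntegrable (fun s : ℝ => ⟪gradient u (X₀ + s • (X - X₀)), X - X₀⟫)
        volume 0 1 :=
      (hc.mono (by rw [uIcc_of_le (zero_le_one : (0:ℝ) ≤ 1)])).intervalIntegrable
    have heq := intervalIntegral.integral_eq_sub_of_hasDerivAt
      (fun s hs => key s (by rwa [uIcc_of_le (zero_le_one : (0:ℝ) ≤ 1)] at hs)) hint
    rw [intervalIntegral.integral_of_le (zero_le_one : (0:ℝ) ≤ 1)] at heq
    rw [heq]
    simp [hu0]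
  -- replace `u` by the FTC formula
  have hrw : ∫ X in ball X₀ ρ, u X
      = ∫ X in ball X₀ ρ, ∫ s in Ioc (0:ℝ) 1, ⟪gradient u (X₀ + s • (X - X₀)), X - X₀⟫ :=
    setIntegral_congr_fun measurableSet_ball (fun X hX => hFTC X hX)
  -- Fubini
  haveI hfin1 : IsFiniteMeasure (volume.restrict (ball X₀ ρ)) :=
    ⟨by rw [Measure.restrict_apply_univ]; exact measure_ball_lt_top⟩
  haveI hfin2 : IsFiniteMeasure (volume.restrict (Ioc (0:ℝ) 1)) :=
    ⟨by rw [Measure.restrict_apply_univ]; exact measure_Ioc_lt_top⟩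
  have hIF : Integrable
      (Function.uncurry fun (X : EuclideanSpace ℝ (Fin N)) (s : ℝ) =>
        ⟪gradient u (X₀ + s • (X - X₀)), X - X₀⟫)
      ((volume.restrict (ball X₀ ρ)).prod (volume.restrict (Ioc (0:ℝ) 1))) := by
    have hcF : ContinuousOn
        (Function.uncurry fun (X : EuclideanSpace ℝ (Fin N)) (s : ℝ) =>
          ⟪gradient u (X₀ + s • (X - X₀)), X - X₀⟫)
        ((ball X₀ ρ) ×ˢ (Ioc (0:ℝ) 1)) := by
      apply ContinuousOn.inner
      · apply hgc.comp
        · exact (continuous_const.add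
            (continuous_snd.smul (continuous_fst.sub continuous_const))).continuousOn
        · rintro ⟨X, s⟩ ⟨hX, hs⟩
          exact hseg X hX s ⟨hs.1.le, hs.2⟩
      · exact (continuous_fst.sub continuous_const).continuousOn
    apply Integrable.mono' (integrable_const (M * ρ))
    · rw [Measure.prod_restrict]
      exact hcF.aestronglyMeasurable (measurableSet_ball.prod measurableSet_Ioc)
    · rw [Measure.prod_restrict, ae_restrict_iff' (measurableSet_ball.prod measurableSet_Ioc)]
      apply ae_of_all
      rintro ⟨X, s⟩ ⟨hX, hs⟩
      have h1 : ‖gradient u (X₀ + s • (X - X₀))‖ ≤ M := hM _ (hseg X hX s ⟨hs.1.le, hs.2⟩)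
      have h2 : ‖X - X₀‖ ≤ ρ := by
        rw [← dist_eq_norm]; exact (mem_ball.1 hX).le
      calc ‖Function.uncurry (fun (X : EuclideanSpace ℝ (Fin N)) (s : ℝ) =>
              ⟪gradient u (X₀ + s • (X - X₀)), X - X₀⟫) (X, s)‖
          ≤ ‖gradient u (X₀ + s • (X - X₀))‖ * ‖X - X₀‖ := by
            simpa [Function.uncurry, Real.norm_eq_abs] using
              abs_real_inner_le_norm (gradient u (X₀ + s • (X - X₀))) (X - X₀)
        _ ≤ M * ρ := mul_le_mul h1 h2 (norm_nonneg _) hM0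
  rw [hrw, integral_integral_swap hIF]
  -- per-slice estimate
  have hmain : ∀ s ∈ Ioc (0:ℝ) 1,
      ‖∫ X in ball X₀ ρ, ⟪gradient u (X₀ + s • (X - X₀)), X - X₀⟫‖ ≤ K * ρ ^ (N + 1) := by
    intro s hs
    obtain ⟨hs0, hs1⟩ := hs
    set t := s * ρ with htdef
    have ht : 0 < t := mul_pos hs0 hρ
    have htρ : t ≤ ρ := by
      rw [htdef]
      calc s * ρ ≤ 1 * ρ := mul_le_mul_of_nonneg_right hs1 hρ.le
        _ = ρ := one_mul ρ
    have hosc' := hosc t ⟨ht, htρ⟩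
    rw [Real.rpow_natCast] at hosc'
    set A := ⨍ Y in ball X₀ t, gradient u Y with hA
    -- integrability helper
    have hIOn : ∀ (f : EuclideanSpace ℝ (Fin N) → ℝ) (C : ℝ),
        ContinuousOn f (ball X₀ ρ) → (∀ Y ∈ ball X₀ ρ, ‖f Y‖ ≤ C) →
        IntegrableOn f (ball X₀ t) volume := by
      intro f C hf hC
      haveI : IsFiniteMeasure (volume.restrict (ball X₀ t)) :=
        ⟨by rw [Measure.restrict_apply_univ]; exact measure_ball_lt_top⟩
      apply Integrable.mono' (integrable_const C)
      · exact (hf.mono (ball_subset_ball htρ)).aestronglyMeasurable measurableSet_ball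
      · rw [ae_restrict_iff' measurableSet_ball]
        exact ae_of_all _ fun Y hY => hC Y (ball_subset_ball htρ hY)
    have hnorm_ball : ∀ W ∈ ball X₀ ρ, ‖W - X₀‖ ≤ ρ := fun W hW => by
      rw [← dist_eq_norm]; exact (mem_ball.1 hW).le
    have hcsub : ContinuousOn (fun W : EuclideanSpace ℝ (Fin N) => W - X₀) (ball X₀ ρ) :=
      (continuous_id.sub continuous_const).continuousOn
    have hint1 : IntegrableOn (fun W => ⟪gradient u W, W - X₀⟫) (ball X₀ t) volume := by
      apply hIOn _ (M * ρ) (hgc.inner hcsub)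
      intro Y hY
      calc ‖⟪gradient u Y, Y - X₀⟫‖ ≤ ‖gradient u Y‖ * ‖Y - X₀‖ := by
            simpa [Real.norm_eq_abs] using abs_real_inner_le_norm (gradient u Y) (Y - X₀)
        _ ≤ M * ρ := mul_le_mul (hM Y hY) (hnorm_ball Y hY) (norm_nonneg _) hM0
    have hint2 : IntegrableOn (fun W => ⟪A, W - X₀⟫) (ball X₀ t) volume := by
      apply hIOn _ (‖A‖ * ρ) (continuousOn_const.inner hcsub)
      intro Y hY
      calc ‖⟪A, Y - X₀⟫‖ ≤ ‖A‖ * ‖Y - X₀‖ := by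
            simpa [Real.norm_eq_abs] using abs_real_inner_le_norm A (Y - X₀)
        _ ≤ ‖A‖ * ρ := mul_le_mul_of_nonneg_left (hnorm_ball Y hY) (norm_nonneg _)
    have hint3 : IntegrableOn (fun W => ⟪gradient u W - A, W - X₀⟫) (ball X₀ t) volume := by
      have : (fun W => ⟪gradient u W - A, W - X₀⟫)
          = fun W => ⟪gradient u W, W - X₀⟫ - ⟪A, W - X₀⟫ := by
        funext W; rw [inner_sub_left]
      rw [this]
      exact hint1.sub hint2
    have hint4 : IntegrableOn (fun W => ‖gradient u W - A‖ * t) (ball X₀ t) volume := by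
      apply hIOn _ ((M + ‖A‖) * t)
      · exact ((hgc.sub continuousOn_const).norm.mul continuousOn_const)
      · intro Y hY
        rw [norm_mul, Real.norm_eq_abs (t), abs_of_pos ht]
        apply mul_le_mul_of_nonneg_right _ ht.le
        rw [norm_norm]
        calc ‖gradient u Y - A‖ ≤ ‖gradient u Y‖ + ‖A‖ := norm_sub_le _ _
          _ ≤ M + ‖A‖ := add_le_add_left (hM Y hY) _
    -- the constant part integrates to zero
    have hA0 : ∫ W in ball X₀ t, ⟪A, W - X₀⟫ = 0 := by
      rw [transl (fun Z => ⟪A, Z⟫) X₀ t]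
      exact oddzero A t
    have hsplit : ∫ W in ball X₀ t, ⟪gradient u W, W - X₀⟫
        = ∫ W in ball X₀ t, ⟪gradient u W - A, W - X₀⟫ := by
      have h : (fun W => ⟪gradient u W - A, W - X₀⟫)
          = fun W => ⟪gradient u W, W - X₀⟫ - ⟪A, W - X₀⟫ := by
        funext W; rw [inner_sub_left]
      rw [h, integral_sub hint1 hint2, hA0, sub_zero]
    -- the key bound on the inner integral
    have hIbound : ‖∫ W in ball X₀ t, ⟪gradient u W, W - X₀⟫‖ ≤ K * t ^ N * t := by
      rw [hsplit]
      calc ‖∫ W in ball X₀ t, ⟪gradient u W - A, W - X₀⟫‖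
          ≤ ∫ W in ball X₀ t, ‖⟪gradient u W - A, W - X₀⟫‖ := norm_integral_le_integral_norm _
        _ ≤ ∫ W in ball X₀ t, ‖gradient u W - A‖ * t := by
            apply setIntegral_mono_on hint3.norm hint4 measurableSet_ball
            intro W hW
            calc ‖⟪gradient u W - A, W - X₀⟫‖ ≤ ‖gradient u W - A‖ * ‖W - X₀‖ := by
                  simpa [Real.norm_eq_abs] using
                    abs_real_inner_le_norm (gradient u W - A) (W - X₀)
              _ ≤ ‖gradient u W - A‖ * t := by
                  apply mul_le_mul_of_nonneg_left _ (norm_nonneg _)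
                  rw [← dist_eq_norm]; exact (mem_ball.1 hW).le
        _ = (∫ W in ball X₀ t, ‖gradient u W - A‖) * t := integral_mul_const _ _
        _ ≤ K * t ^ N * t := mul_le_mul_of_nonneg_right hosc' ht.le
    -- change of variables
    have e1 : ∫ X in ball X₀ ρ, ⟪gradient u (X₀ + s • (X - X₀)), X - X₀⟫
        = ∫ Z in ball (0 : EuclideanSpace ℝ (Fin N)) ρ, ⟪gradient u (X₀ + s • Z), Z⟫ :=
      transl (fun Z => ⟪gradient u (X₀ + s • Z), Z⟫) X₀ ρ
    have e3 : ∫ Z in ball (0 : EuclideanSpace ℝ (Fin N)) ρ, ⟪gradient u (X₀ + s • Z), Z⟫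
        = s⁻¹ * ∫ Z in ball (0 : EuclideanSpace ℝ (Fin N)) ρ,
            (fun Y => ⟪gradient u (X₀ + Y), Y⟫) (s • Z) := by
      rw [← integral_const_mul]
      apply setIntegral_congr_fun measurableSet_ball
      intro Z hZ
      simp only [real_inner_smul_right]
      field_simp
    have e4 := scalg (fun Y => ⟪gradient u (X₀ + Y), Y⟫) hs0 ρ
    have e5 : ∫ Y in ball (0 : EuclideanSpace ℝ (Fin N)) (s * ρ), ⟪gradient u (X₀ + Y), Y⟫
        = ∫ W in ball X₀ (s * ρ), ⟪gradient u W, W - X₀⟫ := by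
      rw [← transl (fun Y => ⟪gradient u (X₀ + Y), Y⟫) X₀ (s * ρ)]
      apply setIntegral_congr_fun measurableSet_ball
      intro W hW
      simp
    rw [e1, e3, e4, e5, ← htdef]
    rw [norm_mul, norm_mul, Real.norm_eq_abs s⁻¹, abs_of_pos (inv_pos.2 hs0),
      Real.norm_eq_abs ((s ^ N)⁻¹), abs_of_pos (inv_pos.2 (pow_pos hs0 N))]
    calc s⁻¹ * ((s ^ N)⁻¹ * ‖∫ W in ball X₀ t, ⟪gradient u W, W - X₀⟫‖)
        ≤ s⁻¹ * ((s ^ N)⁻¹ * (K * t ^ N * t)) := by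
          apply mul_le_mul_of_nonneg_left _ (inv_pos.2 hs0).le
          exact mul_le_mul_of_nonneg_left hIbound (inv_pos.2 (pow_pos hs0 N)).le
      _ = K * ρ ^ (N + 1) := by
          rw [htdef]
          field_simp
          ring
  -- conclude
  calc |∫ s in Ioc (0:ℝ) 1, ∫ X in ball X₀ ρ, ⟪gradient u (X₀ + s • (X - X₀)), X - X₀⟫|
      ≤ (K * ρ ^ (N + 1)) * (volume (Ioc (0:ℝ) 1)).toReal := by
        apply norm_setIntegral_le_of_norm_le_const measure_Ioc_lt_top hmain
    _ = K * ρ ^ (N + 1) := by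
        simp [Real.volume_Ioc]
end
end
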